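/- Let H be a complex Hilbert space of finite dimension d, I a bounded interval, y ∈ ℝ, r, R > 0, and γ_n := 2π|I|⁻¹ n for n ∈ ℤ. Let (ω_k)_{k∈ℤ} satisfy the gap condition inf_{k≠n} |ω_k − ω_n| > 0, let (U_k)_{k∈ℤ} be unit vectors in H, write e_k(t) := U_k e^{iω_k t}, and suppose (φ_k)_{k∈ℤ} is a bounded family in L²(I,H) biorthogonal to (e_k)_{k∈ℤ}. Let V_r, W_{r+R}, P_r, Q_{r+R}, S be as follows: V_r = span{e_k : |ω_k − y| < r}, W_{r+R} = span{U e^{iγ_n t} : |γ_n − y| < r+R, U ∈ H}, P_r and Q_{r+R} the orthogonal projections onto V_r and W_{r+R}, and S := P_r ∘ Q_{r+R} restricted to V_r. Then tr(S) = Card(Ω_r) + Σ_{|ω_k − y| < r} ((Q_{r+R} − Id) e_k, P_r φ_k)_{L²(I,H)}, where Ω_r := {ω_k : |ω_k − y| < r, k ∈ ℤ}. -/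

import Mathlib

open MeasureTheory Complex

noncomputable section

variable {H : Type*} [NormedAddCommGroup H] [InnerProductSpace ℂ H]

lemma memℒp_expSmul (a b : ℝ) (ν : ℝ) (u : H) :
    MemLp (fun t : ℝ => Complex.exp (Complex.I * ν * t) • u) 2
      (volume.restrict (Set.Ioo a b)) := by
  have hc : Continuous fun t : ℝ => Complex.exp (Complex.I * ν * t) • u := by
    fun_prop
  refine MemLp.of_bound hc.aestronglyMeasurable ‖u‖ (Filter.Eventually.of_forall fun t => ?_)
  rw [norm_smul]
  have : ‖Complex.exp (Complex.I * ν * t)‖ = 1 := by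
    rw [Complex.norm_exp]
    simp [Complex.mul_re]
  rw [this, one_mul]

/-- The element `t ↦ e^{iνt} u` of `L²((a,b), H)`. -/
def expLp (a b : ℝ) (ν : ℝ) (u : H) : Lp H 2 (volume.restrict (Set.Ioo a b)) :=
  (memℒp_expSmul a b ν u).toLp _

/-- Trace formula: `tr S = Card Ω_r + Σ_{|ω_k - y| < r} ((Q_{r+R} - Id) e_k, P_r φ_k)`,
where `(φ_k)` is a bounded biorthogonal family to `(e_k)` in `L²(I,H)`.  (The inner
product `(u, v)` of the paper, linear in `u`, is `⟪v, u⟫` in Mathlib's convention.) -/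
theorem stmt6 [FiniteDimensional ℂ H] (d : ℕ) (hd : Module.finrank ℂ H = d)
    (ω : ℤ → ℝ)
    (hgap : 0 < ⨅ p : {p : ℤ × ℤ // p.1 ≠ p.2}, |ω p.1.1 - ω p.1.2|)
    (U : ℤ → H) (hU : ∀ k, ‖U k‖ = 1)
    (a b : ℝ) (hab : a < b) (y r R : ℝ) (hr : 0 < r) (hR : 0 < R)
    (e : ℤ → Lp H 2 (volume.restrict (Set.Ioo a b)))
    (he : ∀ k, e k = expLp a b (ω k) (U k))
    (φ : ℤ → Lp H 2 (volume.restrict (Set.Ioo a b)))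
    (hbior : ∀ k n : ℤ, (inner ℂ (φ n) (e k) : ℂ) = if k = n then 1 else 0)
    (hbdd : ∃ C : ℝ, ∀ k, ‖φ k‖ ≤ C)
    (V W : Submodule ℂ (Lp H 2 (volume.restrict (Set.Ioo a b))))
    (hV : V = Submodule.span ℂ {f | ∃ k : ℤ, |ω k - y| < r ∧ f = e k})
    (hW : W = Submodule.span ℂ
      {f | ∃ n : ℤ, ∃ u : H, |2 * Real.pi / (b - a) * n - y| < r + R ∧
        f = expLp a b (2 * Real.pi / (b - a) * n) u})
    (P Q : Lp H 2 (volume.restrict (Set.Ioo a b)) →L[ℂ]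
      Lp H 2 (volume.restrict (Set.Ioo a b)))
    (hP : ∀ f, P f ∈ V ∧ f - P f ∈ Vᗮ)
    (hQ : ∀ f, Q f ∈ W ∧ f - Q f ∈ Wᗮ)
    (S : V →ₗ[ℂ] V)
    (hS : S = LinearMap.codRestrict V
      ((P.toLinearMap.comp Q.toLinearMap).comp V.subtype) (fun v => (hP _).1)) :
    LinearMap.trace ℂ V S =
      (Nat.card {x : ℝ | ∃ k : ℤ, x = ω k ∧ |x - y| < r} : ℂ) +
        ∑' k : {k : ℤ // |ω k - y| < r},
          (inner ℂ (P (φ k)) (Q (e k) - e k) : ℂ) := by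
  classical
  set δ := ⨅ p : {p : ℤ × ℤ // p.1 ≠ p.2}, |ω p.1.1 - ω p.1.2| with hδdef
  have hbb : BddBelow (Set.range fun p : {p : ℤ × ℤ // p.1 ≠ p.2} => |ω p.1.1 - ω p.1.2|) :=
    ⟨0, by rintro x ⟨p, rfl⟩; positivity⟩
  have hδle : ∀ k n : ℤ, k ≠ n → δ ≤ |ω k - ω n| := fun k n h => ciInf_le hbb ⟨(k, n), h⟩
  have hδpos : 0 < δ := hgap
  have hωinj : Function.Injective ω := by
    intro k n h
    by_contra hkn
    have h1 := hδle k n hkn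
    rw [h, sub_self, abs_zero] at h1
    linarith
  -- finiteness of the index set
  have hKfin : ({k : ℤ | |ω k - y| < r}).Finite := by
    have hfloorinj : Function.Injective (fun k : ℤ => ⌊ω k / δ⌋) := by
      intro k n h
      by_contra hkn
      have h1 := hδle k n hkn
      simp only at h
      have hk1 : (⌊ω k / δ⌋ : ℝ) ≤ ω k / δ := Int.floor_le _
      have hk2 : ω k / δ < ⌊ω k / δ⌋ + 1 := Int.lt_floor_add_one _
      have hn1 : (⌊ω n / δ⌋ : ℝ) ≤ ω n / δ := Int.floor_le _
      have hn2 : ω n / δ < ⌊ω n / δ⌋ + 1 := Int.lt_floor_add_one _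
      rw [h] at hk1 hk2
      have habs : |(ω k - ω n) / δ| < 1 := by
        rw [sub_div]; rw [abs_lt]; constructor <;> linarith
      rw [abs_div, abs_of_pos hδpos, div_lt_one hδpos] at habs
      linarith
    refine Set.Finite.subset
      (Set.Finite.preimage (Set.injOn_of_injective hfloorinj)
        (Set.finite_Icc ⌊(y - r) / δ⌋ ⌊(y + r) / δ⌋)) ?_
    intro k hk
    simp only [Set.mem_setOf_eq] at hk
    obtain ⟨h1, h2⟩ := abs_lt.mp hk
    simp only [Set.mem_preimage, Set.mem_Icc]
    constructor
    · exact Int.floor_le_floor ((div_le_div_iff_of_pos_right hδpos).mpr (by linarith))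
    · exact Int.floor_le_floor ((div_le_div_iff_of_pos_right hδpos).mpr (by linarith))
  haveI hKfinty : Fintype {k : ℤ // |ω k - y| < r} := hKfin.fintype
  set K := {k : ℤ // |ω k - y| < r}
  -- membership of e k in V
  have heV : ∀ k : K, e (k : ℤ) ∈ V := by
    intro k
    rw [hV]
    exact Submodule.subset_span ⟨k, k.2, rfl⟩
  -- linear independence
  have hli : LinearIndependent ℂ (fun k : K => e (k : ℤ)) := by
    rw [linearIndependent_iff']
    intro s g hsum j hj
    have := congrArg (fun v : Lp H 2 (volume.restrict (Set.Ioo a b)) => (inner ℂ (φ (j : ℤ)) v : ℂ)) hsum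
    simp only [inner_zero_right] at this
    rw [inner_sum] at this
    have hterm : ∀ i ∈ s, (inner ℂ (φ (j : ℤ)) (g i • e (i : ℤ)) : ℂ)
        = if i = j then g i else 0 := by
      intro i _
      rw [inner_smul_right, hbior (i : ℤ) (j : ℤ)]
      by_cases h : i = j
      · simp [h]
      · have : (i : ℤ) ≠ (j : ℤ) := fun hc => h (Subtype.ext hc)
        simp [h, this]
    rw [Finset.sum_congr rfl hterm, Finset.sum_ite_eq' s j (fun i => g i), if_pos hj] at this
    exact this
  -- span equality
  have hset : Set.range (fun k : K => e (k : ℤ))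
      = {f | ∃ k : ℤ, |ω k - y| < r ∧ f = e k} := by
    ext f
    constructor
    · rintro ⟨k, rfl⟩; exact ⟨k, k.2, rfl⟩
    · rintro ⟨k, hk, rfl⟩; exact ⟨⟨k, hk⟩, rfl⟩
  have hspan : Submodule.span ℂ (Set.range fun k : K => e (k : ℤ)) = V := by
    rw [hV, hset]
  -- basis of V
  set B : Module.Basis K ℂ V := (Module.Basis.span hli).map (LinearEquiv.ofEq _ _ hspan) with hB
  have hBval : ∀ k : K, (B k : Lp H 2 (volume.restrict (Set.Ioo a b))) = e (k : ℤ) := by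
    intro k
    rw [hB]
    simp only [Module.Basis.map_apply]
    exact congrArg Subtype.val (Module.Basis.span_apply hli k)
  -- orthogonality helpers
  have horth1 : ∀ f g : Lp H 2 (volume.restrict (Set.Ioo a b)), (inner ℂ (f - P f) (P g) : ℂ) = 0 := by
    intro f g
    have h := (Submodule.mem_orthogonal' V (f - P f)).mp (hP f).2 (P g) (hP g).1
    exact h
  have horth2 : ∀ f g : Lp H 2 (volume.restrict (Set.Ioo a b)), (inner ℂ (P f) (g - P g) : ℂ) = 0 := by
    intro f g
    exact (Submodule.mem_orthogonal V (g - P g)).mp (hP g).2 (P f) (hP f).1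
  have hselfadj : ∀ f g : Lp H 2 (volume.restrict (Set.Ioo a b)), (inner ℂ f (P g) : ℂ) = inner ℂ (P f) g := by
    intro f g
    have h1 := horth1 f g
    have h2 := horth2 f g
    rw [inner_sub_left] at h1
    rw [inner_sub_right] at h2
    have : (inner ℂ f (P g) : ℂ) = inner ℂ (P f) (P g) := by linear_combination h1
    rw [this]
    linear_combination -h2
  have hPe : ∀ k : K, P (e (k : ℤ)) = e (k : ℤ) := by
    intro k
    have hm : e (k : ℤ) - P (e (k : ℤ)) ∈ V := sub_mem (heV k) (hP _).1
    have ho := (Submodule.mem_orthogonal V (e (k : ℤ) - P (e (k : ℤ)))).mp (hP _).2 _ hm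
    rw [inner_self_eq_zero] at ho
    rw [sub_eq_zero] at ho
    exact ho.symm
  -- coordinates via biorthogonal family
  have hrepr : ∀ (k : K) (v : V), B.repr v k = (inner ℂ (φ (k : ℤ)) (v : Lp H 2 (volume.restrict (Set.Ioo a b))) : ℂ) := by
    intro k
    have heq : B.coord k = ((innerSL ℂ (φ (k : ℤ))).toLinearMap).comp V.subtype := by
      apply B.ext
      intro j
      simp only [Module.Basis.coord_apply, Module.Basis.repr_self, LinearMap.comp_apply,
        ContinuousLinearMap.coe_coe, Submodule.coe_subtype, innerSL_apply_apply]
      rw [hBval j, hbior (j : ℤ) (k : ℤ), Finsupp.single_apply]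
      by_cases h : j = k
      · simp [h]
      · have : (j : ℤ) ≠ (k : ℤ) := fun hc => h (Subtype.ext hc)
        simp [h, this]
    intro v
    have := congrFun (congrArg (fun L : V →ₗ[ℂ] ℂ => (L : V → ℂ)) heq) v
    simpa [Module.Basis.coord_apply] using this
  -- compute the trace
  rw [LinearMap.trace_eq_matrix_trace ℂ B S]
  simp only [Matrix.trace, Matrix.diag]
  have hdiag : ∀ k : K, (LinearMap.toMatrix B B S) k k
      = 1 + (inner ℂ (P (φ (k : ℤ))) (Q (e (k : ℤ)) - e (k : ℤ)) : ℂ) := by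
    intro k
    rw [LinearMap.toMatrix_apply]
    rw [hrepr k (S (B k))]
    have hSval : ((S (B k) : V) : Lp H 2 (volume.restrict (Set.Ioo a b))) = P (Q (e (k : ℤ))) := by
      rw [hS]
      simp only [LinearMap.codRestrict_apply, LinearMap.comp_apply,
        Submodule.coe_subtype, ContinuousLinearMap.coe_coe]
      rw [hBval k]
    rw [hSval]
    rw [hselfadj]
    rw [inner_sub_right]
    have h1 : (inner ℂ (P (φ (k : ℤ))) (e (k : ℤ)) : ℂ) = 1 := by
      rw [← hselfadj (φ (k : ℤ)) (e (k : ℤ)), hPe k, hbior (k : ℤ) (k : ℤ), if_pos rfl]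
    linear_combination h1
  simp only [hdiag]
  rw [Finset.sum_add_distrib, Finset.sum_const, Finset.card_univ, nsmul_eq_mul, mul_one]
  congr 1
  · -- cardinality
    have hNE : Nat.card {x : ℝ | ∃ k : ℤ, x = ω k ∧ |x - y| < r} = Fintype.card K := by
      have hf : Function.Bijective (fun k : K =>
          (⟨ω (k : ℤ), ⟨(k : ℤ), rfl, k.2⟩⟩ : {x : ℝ | ∃ k : ℤ, x = ω k ∧ |x - y| < r})) := by
        constructor
        · intro k n h
          exact Subtype.ext (hωinj (congrArg Subtype.val h))
        · rintro ⟨x, k, rfl, hx⟩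
          exact ⟨⟨k, hx⟩, rfl⟩
      rw [← Nat.card_eq_fintype_card]
      exact (Nat.card_congr (Equiv.ofBijective _ hf)).symm
    rw [hNE]
  · exact (tsum_fintype _).symm
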